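/- Let n ≥ 1, a, b ≥ 0 with b > 0, and let M be the n × n matrix with M_{ii} = a and M_{ij} = b for i ≠ j. Define Θ(ξ) = ρ(M·Diag(ξ)) for ξ ∈ [0,∞)^n, where ρ denotes the spectral radius. If a ≥ b, then Θ is Schur-convex: ξ ≺ χ implies Θ(ξ) ≤ Θ(χ). If a ≤ b, then Θ is Schur-concave: ξ ≺ χ implies Θ(ξ) ≥ Θ(χ). -/

import Mathlib

/-- The sum of the `m` largest entries of `ξ ∈ ℝ^n`, expressed as the supremum of the
sums of `ξ` over subsets of cardinality `m`. -/
noncomputable def topSum {n : ℕ} (ξ : Fin n → ℝ) (m : ℕ) : ℝ :=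
  sSup ((fun s : Finset (Fin n) => ∑ i ∈ s, ξ i) '' {s | s.card = m})

/-- `ξ` is majorized by `χ`: for every `m`, the sum of the `m` largest entries of `ξ`
is at most the sum of the `m` largest entries of `χ`, and the total sums agree. -/
def IsMajorizedBy {n : ℕ} (ξ χ : Fin n → ℝ) : Prop :=
  (∀ m, m ≤ n → topSum ξ m ≤ topSum χ m) ∧ ∑ i, ξ i = ∑ i, χ i

/-- The spectral radius of a real square matrix: the maximum of the moduli of its
complex eigenvalues. -/
noncomputable def matrixSpecRad {n : ℕ} (A : Matrix (Fin n) (Fin n) ℝ) : ℝ :=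
  sSup ((fun z : ℂ => ‖z‖) '' spectrum ℂ (A.map Complex.ofReal))

open Finset Matrix

lemma strictMono_fin_le {m n : ℕ} (f : Fin m → Fin n) (hf : StrictMono f) :
    ∀ k : Fin m, (k : ℕ) ≤ (f k : ℕ) := by
  have key : ∀ j : ℕ, ∀ h : j < m, j ≤ (f ⟨j, h⟩ : ℕ) := by
    intro j
    induction j with
    | zero => intro h; exact Nat.zero_le _
    | succ i ih =>
      intro h
      have hi : i < m := Nat.lt_of_succ_lt h
      have h1 : f ⟨i, hi⟩ < f ⟨i + 1, h⟩ := hf (by simp [Fin.lt_def])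
      have h2 := ih hi
      have h3 : (f ⟨i, hi⟩ : ℕ) < (f ⟨i + 1, h⟩ : ℕ) := h1
      omega
  intro k; simpa using key k.1 k.2

/-- extension of `z : Fin n → ℝ` to `ℕ` by zero -/
noncomputable def zext {n : ℕ} (z : Fin n → ℝ) (k : ℕ) : ℝ :=
  if h : k < n then z ⟨k, h⟩ else 0

lemma sum_le_initial {n : ℕ} (z : Fin n → ℝ) (hz : Antitone z) (s : Finset (Fin n)) {m : ℕ}
    (hm : s.card = m) :
    ∑ i ∈ s, z i ≤ ∑ k ∈ Finset.range m, zext z k := by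
  have hmn : m ≤ n := by simpa [hm] using Finset.card_le_univ s
  set f := s.orderEmbOfFin hm with hfdef
  have hinj : Function.Injective f := f.injective
  have himg : Finset.image f Finset.univ = s := by
    apply Finset.coe_injective
    rw [Finset.coe_image, Finset.coe_univ, Set.image_univ]
    exact Finset.range_orderEmbOfFin s hm
  have h1 : ∑ i ∈ s, z i = ∑ k : Fin m, z (f k) := by
    rw [← himg, Finset.sum_image (fun x _ y _ h => hinj h)]
  have h2 : ∑ k ∈ Finset.range m, zext z k = ∑ k : Fin m, z ⟨k.1, lt_of_lt_of_le k.2 hmn⟩ := by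
    rw [← Fin.sum_univ_eq_sum_range]
    exact Finset.sum_congr rfl fun k _ => by
      simp [zext, dif_pos (lt_of_lt_of_le k.2 hmn)]
  rw [h1, h2]
  apply Finset.sum_le_sum
  intro k _
  exact hz (show (⟨k.1, _⟩ : Fin n) ≤ f k from strictMono_fin_le f f.strictMono k)

lemma topSum_eq {n : ℕ} (ξ z : Fin n → ℝ) (e : Equiv.Perm (Fin n)) (hz : Antitone z)
    (hξ : ξ = z ∘ e) {m : ℕ} (hm : m ≤ n) :
    topSum ξ m = ∑ k ∈ Finset.range m, zext z k := by
  apply IsGreatest.csSup_eq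
  constructor
  · -- achieved by the preimage of the initial segment
    have hmem : ∀ x ∈ Finset.range m, x < n := fun x hx =>
      lt_of_lt_of_le (Finset.mem_range.1 hx) hm
    set t : Finset (Fin n) := (Finset.range m).attachFin hmem with ht
    have hcard : t.card = m := by rw [ht, Finset.card_attachFin, Finset.card_range]
    refine ⟨Finset.image e.symm t, ?_, ?_⟩
    · simp only [Set.mem_setOf_eq, Finset.card_image_of_injective _ e.symm.injective]
      exact hcard
    · show ∑ i ∈ Finset.image e.symm t, ξ i = _
      rw [Finset.sum_image (fun x _ y _ h => e.symm.injective h)]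
      have : ∀ i ∈ t, ξ (e.symm i) = z i := by
        intro i _; rw [hξ]; simp
      rw [Finset.sum_congr rfl this]
      -- ∑ i ∈ t, z i = ∑ k ∈ range m, zext z k
      refine Finset.sum_bij (fun (i : Fin n) (_ : i ∈ t) => (i : ℕ)) ?_ ?_ ?_ ?_
      · intro i hi; rw [ht, Finset.mem_attachFin] at hi; exact hi
      · intro i hi j hj h; exact Fin.val_injective h
      · intro k hk
        have hkn := hmem k hk
        exact ⟨⟨k, hkn⟩, by rw [ht, Finset.mem_attachFin]; exact hk, rfl⟩
      · intro i hi
        simp [zext, dif_pos (i.2 : (i : ℕ) < n)]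
  · rintro x ⟨s, hs, rfl⟩
    simp only [Set.mem_setOf_eq] at hs
    show ∑ i ∈ s, ξ i ≤ _
    -- ∑ i ∈ s, ξ i = ∑ j ∈ s.image e, z j
    have : ∑ i ∈ s, ξ i = ∑ j ∈ Finset.image e s, z j := by
      rw [Finset.sum_image (fun x _ y _ h => e.injective h), hξ]; rfl
    rw [this]
    exact sum_le_initial z hz _ (by rw [Finset.card_image_of_injective _ e.injective, hs])

lemma exists_antitone_perm {n : ℕ} (ξ : Fin n → ℝ) :
    ∃ (z : Fin n → ℝ) (e : Equiv.Perm (Fin n)), Antitone z ∧ ξ = z ∘ e := by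
  set σ := Tuple.sort ξ with hσ
  refine ⟨ξ ∘ σ ∘ Fin.revPerm, σ⁻¹.trans Fin.revPerm, ?_, ?_⟩
  · intro i j hij
    exact Tuple.monotone_sort ξ (by simpa [Fin.rev_le_rev] using hij)
  · funext i
    simp [Equiv.trans]


lemma abel_nonneg (s d : ℕ → ℝ) (n : ℕ)
    (hs : ∀ k, k + 1 < n → s (k + 1) ≤ s k)
    (hP : ∀ m, m ≤ n → 0 ≤ ∑ k ∈ Finset.range m, d k)
    (hPn : ∑ k ∈ Finset.range n, d k = 0) :
    0 ≤ ∑ k ∈ Finset.range n, s k * d k := by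
  have key := Finset.sum_range_by_parts s d n
  simp only [smul_eq_mul] at key
  rw [key, hPn, mul_zero, zero_sub, neg_nonneg]
  apply Finset.sum_nonpos
  intro i hi
  rw [Finset.mem_range] at hi
  have h1 : s (i + 1) ≤ s i := hs i (by omega)
  have h2 : 0 ≤ ∑ j ∈ Finset.range (i + 1), d j := hP (i + 1) (by omega)
  nlinarith



lemma maj_sum_le {n : ℕ} (ξ χ : Fin n → ℝ) (hmaj : IsMajorizedBy ξ χ)
    (P : ℝ → Prop) (hPξ : ∀ i, P (ξ i)) (hPχ : ∀ i, P (χ i))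
    (φ : ℝ → ℝ) (S : ℝ → ℝ → ℝ)
    (hφ : ∀ x y, P x → P y → φ y - φ x = S x y * (y - x))
    (hS : ∀ x y x' y', P x → P y → P x' → P y' → x' ≤ x → y' ≤ y → S x' y' ≤ S x y) :
    ∑ i, φ (ξ i) ≤ ∑ i, φ (χ i) := by
  obtain ⟨zξ, eξ, hzξ, hξ⟩ := exists_antitone_perm ξ
  obtain ⟨zχ, eχ, hzχ, hχ⟩ := exists_antitone_perm χ
  -- properties transfer to sorted versions
  have hPzξ : ∀ i, P (zξ i) := fun i => by
    have := hPξ (eξ.symm i); rwa [hξ, Function.comp_apply, Equiv.apply_symm_apply] at this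
  have hPzχ : ∀ i, P (zχ i) := fun i => by
    have := hPχ (eχ.symm i); rwa [hχ, Function.comp_apply, Equiv.apply_symm_apply] at this
  -- reduce sums to sorted versions
  have hsumξ : ∑ i, φ (ξ i) = ∑ i, φ (zξ i) := by
    rw [hξ]; exact Equiv.sum_comp eξ (fun i => φ (zξ i))
  have hsumχ : ∑ i, φ (χ i) = ∑ i, φ (zχ i) := by
    rw [hχ]; exact Equiv.sum_comp eχ (fun i => φ (zχ i))
  rw [hsumξ, hsumχ, ← sub_nonneg, ← Finset.sum_sub_distrib]
  -- convert to a range-n sum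
  have hconv : ∀ (g : Fin n → ℝ), ∑ i, g i = ∑ k ∈ Finset.range n,
      (if h : k < n then g ⟨k, h⟩ else 0) := by
    intro g
    rw [← Fin.sum_univ_eq_sum_range]
    exact Finset.sum_congr rfl fun k _ => by simp
  rw [hconv]
  set s : ℕ → ℝ := fun k => if h : k < n then S (zξ ⟨k, h⟩) (zχ ⟨k, h⟩) else 0 with hsdef
  set d : ℕ → ℝ := fun k => zext zχ k - zext zξ k with hddef
  have heq : ∀ k ∈ Finset.range n,
      (if h : k < n then φ (zχ ⟨k, h⟩) - φ (zξ ⟨k, h⟩) else 0) = s k * d k := by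
    intro k hk
    rw [Finset.mem_range] at hk
    simp only [hsdef, hddef, zext, dif_pos hk]
    exact hφ _ _ (hPzξ _) (hPzχ _)
  rw [Finset.sum_congr rfl heq]
  apply abel_nonneg
  · intro k hk
    have hk1 : k + 1 < n := hk
    have hk0 : k < n := by omega
    simp only [hsdef, dif_pos hk1, dif_pos hk0]
    exact hS _ _ _ _ (hPzξ _) (hPzχ _) (hPzξ _) (hPzχ _)
      (hzξ (by simp [Fin.le_def])) (hzχ (by simp [Fin.le_def]))
  · intro m hm
    have h1 : ∑ k ∈ Finset.range m, d k =
        (∑ k ∈ Finset.range m, zext zχ k) - ∑ k ∈ Finset.range m, zext zξ k := by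
      rw [← Finset.sum_sub_distrib]
    rw [h1, ← topSum_eq ξ zξ eξ hzξ hξ hm, ← topSum_eq χ zχ eχ hzχ hχ hm, sub_nonneg]
    exact hmaj.1 m hm
  · have h1 : ∑ k ∈ Finset.range n, d k =
        (∑ k ∈ Finset.range n, zext zχ k) - ∑ k ∈ Finset.range n, zext zξ k := by
      rw [← Finset.sum_sub_distrib]
    have h2 : ∑ k ∈ Finset.range n, zext zξ k = ∑ i, ξ i := by
      have e1 : ∑ k ∈ Finset.range n, zext zξ k = ∑ i, zξ i := by rw [hconv zξ]; rfl
      rw [e1, hξ]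
      exact (Equiv.sum_comp eξ zξ).symm
    have h3 : ∑ k ∈ Finset.range n, zext zχ k = ∑ i, χ i := by
      have e1 : ∑ k ∈ Finset.range n, zext zχ k = ∑ i, zχ i := by rw [hconv zχ]; rfl
      rw [e1, hχ]
      exact (Equiv.sum_comp eχ zχ).symm
    rw [h1, h2, h3, hmaj.2, sub_self]



lemma mem_spec_iff {n : ℕ} (B : Matrix (Fin n) (Fin n) ℂ) (μ : ℂ) :
    μ ∈ spectrum ℂ B ↔ (μ • (1 : Matrix (Fin n) (Fin n) ℂ) - B).det = 0 := by
  rw [spectrum.mem_iff, Matrix.isUnit_iff_isUnit_det, isUnit_iff_ne_zero, not_ne_iff,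
    Algebra.algebraMap_eq_smul_one]

lemma specRad_bdd {n : ℕ} (A : Matrix (Fin n) (Fin n) ℝ) :
    BddAbove ((fun z : ℂ => ‖z‖) '' spectrum ℂ (A.map Complex.ofReal)) :=
  ((Matrix.finite_spectrum _).image _).bddAbove

lemma spec_nonempty {n : ℕ} (hn : 1 ≤ n) (B : Matrix (Fin n) (Fin n) ℂ) :
    (spectrum ℂ B).Nonempty := by
  haveI : Nonempty (Fin n) := ⟨⟨0, hn⟩⟩
  exact spectrum.nonempty_of_isAlgClosed_of_finiteDimensional ℂ B

lemma specRad_nonneg {n : ℕ} (hn : 1 ≤ n) (A : Matrix (Fin n) (Fin n) ℝ) :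
    0 ≤ matrixSpecRad A := by
  obtain ⟨μ, hμ⟩ := spec_nonempty hn (A.map Complex.ofReal)
  calc (0:ℝ) ≤ ‖μ‖ := norm_nonneg μ
  _ ≤ matrixSpecRad A := le_csSup (specRad_bdd A) ⟨μ, hμ, rfl⟩

lemma root_le_specRad {n : ℕ} (A : Matrix (Fin n) (Fin n) ℝ) (r : ℝ)
    (h : (r • (1 : Matrix (Fin n) (Fin n) ℝ) - A).det = 0) : r ≤ matrixSpecRad A := by
  have hmap : ((r • (1 : Matrix (Fin n) (Fin n) ℝ) - A).map Complex.ofReal) =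
      (r : ℂ) • (1 : Matrix (Fin n) (Fin n) ℂ) - A.map Complex.ofReal := by
    ext i j
    by_cases hij : i = j <;>
      simp [hij, Matrix.map_apply, Matrix.one_apply, Matrix.smul_apply]
  have hdet : ((r : ℂ) • (1 : Matrix (Fin n) (Fin n) ℂ) - A.map Complex.ofReal).det = 0 := by
    rw [← hmap]
    have hc : ((r • (1 : Matrix (Fin n) (Fin n) ℝ) - A).map Complex.ofReal).det
        = (((r • (1 : Matrix (Fin n) (Fin n) ℝ) - A).det : ℝ) : ℂ) :=
      (RingHom.map_det Complex.ofRealHom _).symm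
    rw [hc, h, Complex.ofReal_zero]
  have hmem : (r : ℂ) ∈ spectrum ℂ (A.map Complex.ofReal) := (mem_spec_iff _ _).2 hdet
  calc r ≤ |r| := le_abs_self r
  _ = ‖(r : ℂ)‖ := (Complex.norm_real r).symm
  _ ≤ matrixSpecRad A := le_csSup (specRad_bdd A) ⟨_, hmem, rfl⟩

lemma eig_upper {n : ℕ} (hn : 1 ≤ n) (A : Matrix (Fin n) (Fin n) ℝ)
    (hA : ∀ i j, 0 ≤ A i j) (w : Fin n → ℝ) (hw : ∀ i, 0 < w i) (lam : ℝ)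
    (hrow : ∀ i, ∑ j, A i j * w j ≤ lam * w i) : matrixSpecRad A ≤ lam := by
  have hlam0 : 0 ≤ lam := by
    have h0 : (0:ℝ) ≤ ∑ j, A ⟨0, hn⟩ j * w j :=
      Finset.sum_nonneg fun j _ => mul_nonneg (hA _ _) (hw j).le
    nlinarith [hrow ⟨0, hn⟩, hw ⟨0, hn⟩]
  apply Real.sSup_le _ hlam0
  rintro x ⟨μ, hμ, rfl⟩
  rw [mem_spec_iff] at hμ
  obtain ⟨v, hv0, hv⟩ := Matrix.exists_mulVec_eq_zero_iff.2 hμ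
  have hvmul : (A.map Complex.ofReal).mulVec v = μ • v := by
    have := hv
    rw [Matrix.sub_mulVec, Matrix.smul_mulVec, Matrix.one_mulVec, sub_eq_zero] at this
    exact this.symm
  -- pick index maximizing |v i| / w i
  obtain ⟨i0, -, hi0⟩ := Finset.exists_mem_eq_sup' (⟨⟨0, hn⟩, Finset.mem_univ _⟩ :
    (Finset.univ : Finset (Fin n)).Nonempty) (fun i => ‖v i‖ / w i)
  have hmaxdiv : ∀ j, ‖v j‖ / w j ≤ ‖v i0‖ / w i0 := by
    intro j
    rw [← hi0]
    exact Finset.le_sup' (fun i => ‖v i‖ / w i) (Finset.mem_univ j)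
  set t : ℝ := ‖v i0‖ / w i0 with htdef
  have hmax : ∀ j, ‖v j‖ ≤ t * w j := by
    intro j
    have h1 := hmaxdiv j
    have h2 : ‖v j‖ / w j * w j = ‖v j‖ :=
      div_mul_cancel₀ _ (hw j).ne'
    nlinarith [hw j]
  have ht0 : 0 < t := by
    obtain ⟨j, hj⟩ := Function.ne_iff.1 hv0
    have h1 : 0 < ‖v j‖ := by simpa using hj
    have h2 := hmax j
    nlinarith [hw j, hw i0]
  have hvi0 : ‖v i0‖ = t * w i0 := by
    rw [htdef]
    exact (div_mul_cancel₀ _ (hw i0).ne').symm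
  -- the key estimate
  have hkey : ‖μ‖ * (t * w i0) ≤ t * (lam * w i0) := by
    have h1 : μ * v i0 = ∑ j, (A i0 j : ℂ) * v j := by
      have := congrFun hvmul i0
      simp only [Matrix.mulVec, dotProduct, Pi.smul_apply, smul_eq_mul,
        Matrix.map_apply] at this
      rw [← this]
    have h2 : ‖μ * v i0‖ ≤ ∑ j, A i0 j * ‖v j‖ := by
      rw [h1]
      calc ‖∑ j, (A i0 j : ℂ) * v j‖ ≤ ∑ j, ‖(A i0 j : ℂ) * v j‖ :=
            norm_sum_le _ _
      _ = ∑ j, A i0 j * ‖v j‖ := by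
            refine Finset.sum_congr rfl fun j _ => ?_
            rw [norm_mul, Complex.norm_real, Real.norm_eq_abs, abs_of_nonneg (hA i0 j)]
    have h3 : ∑ j, A i0 j * ‖v j‖ ≤ ∑ j, A i0 j * (t * w j) :=
      Finset.sum_le_sum fun j _ => mul_le_mul_of_nonneg_left (hmax j) (hA i0 j)
    have h4 : ∑ j, A i0 j * (t * w j) = t * ∑ j, A i0 j * w j := by
      rw [Finset.mul_sum]; exact Finset.sum_congr rfl fun j _ => by ring
    have h5 : t * ∑ j, A i0 j * w j ≤ t * (lam * w i0) :=
      mul_le_mul_of_nonneg_left (hrow i0) ht0.le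
    calc ‖μ‖ * (t * w i0) = ‖μ * v i0‖ := by
          rw [norm_mul, hvi0]
    _ ≤ ∑ j, A i0 j * ‖v j‖ := h2
    _ ≤ ∑ j, A i0 j * (t * w j) := h3
    _ = t * ∑ j, A i0 j * w j := h4
    _ ≤ t * (lam * w i0) := h5
  nlinarith [hw i0, ht0, mul_pos ht0 (hw i0)]

lemma det_formula {n : ℕ} (a b : ℝ) (M : Matrix (Fin n) (Fin n) ℝ)
    (hM : ∀ i j, M i j = if i = j then a else b) (χ : Fin n → ℝ) (t : ℝ)
    (ht : ∀ i, t - (a - b) * χ i ≠ 0) :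
    (t • (1 : Matrix (Fin n) (Fin n) ℝ) - M * Matrix.diagonal χ).det =
      (∏ i, (t - (a - b) * χ i)) * (1 - ∑ i, b * χ i / (t - (a - b) * χ i)) := by
  set c : ℝ := a - b with hc
  set d : Fin n → ℝ := fun i => t - c * χ i with hd
  set u : Fin n → ℝ := fun i => -(d i)⁻¹ with hu
  set vv : Fin n → ℝ := fun j => b * χ j with hv
  have hfact : t • (1 : Matrix (Fin n) (Fin n) ℝ) - M * Matrix.diagonal χ =
      Matrix.diagonal d * (1 + Matrix.replicateCol Unit u * Matrix.replicateRow Unit vv) := by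
    ext i j
    have hLHS : (t • (1 : Matrix (Fin n) (Fin n) ℝ) - M * Matrix.diagonal χ) i j =
        (if i = j then t - a * χ j else 0 - b * χ j) := by
      by_cases hij : i = j
      · subst hij
        simp [Matrix.sub_apply, Matrix.smul_apply, Matrix.mul_diagonal, hM i i,
          Matrix.one_apply]
      · simp [Matrix.sub_apply, Matrix.smul_apply, Matrix.mul_diagonal, hM i j,
          Matrix.one_apply, hij]
    have hRHS : ((Matrix.diagonal d * (1 + Matrix.replicateCol Unit u * Matrix.replicateRow Unit vv) : Matrix (Fin n) (Fin n) ℝ)) i j =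
        d i * ((if i = j then 1 else 0) + u i * vv j) := by
      rw [Matrix.diagonal_mul]
      congr 1
      simp only [Matrix.add_apply, Matrix.one_apply, Matrix.mul_apply, Matrix.replicateCol_apply,
        Matrix.replicateRow_apply, Finset.univ_unique, Finset.sum_singleton]
    rw [hLHS, hRHS]
    by_cases hij : i = j
    · subst hij
      simp only [if_pos rfl, hu, hv, hd, if_true, mul_one, hc]
      linear_combination (b * χ i) * mul_inv_cancel₀ (show t - (a - b) * χ i ≠ 0 from ht i)
    · simp only [if_neg hij, hu, hv, hd, zero_add, zero_sub, mul_zero, if_false, hc]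
      linear_combination (b * χ j) * mul_inv_cancel₀ (show t - (a - b) * χ i ≠ 0 from ht i)
  rw [hfact, Matrix.det_mul, Matrix.det_diagonal, Matrix.det_one_add_replicateCol_mul_replicateRow]
  congr 1
  have : vv ⬝ᵥ u = -∑ i, b * χ i / (t - c * χ i) := by
    simp only [dotProduct, hu, hv, ← Finset.sum_neg_distrib]
    refine Finset.sum_congr rfl fun i _ => ?_
    rw [div_eq_mul_inv]
    ring
  rw [this]
  ring

lemma root_from_sign {n : ℕ} (A : Matrix (Fin n) (Fin n) ℝ) (t1 T : ℝ) (hT : t1 ≤ T)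
    (h1 : (t1 • (1 : Matrix (Fin n) (Fin n) ℝ) - A).det ≤ 0)
    (h2 : 0 ≤ (T • (1 : Matrix (Fin n) (Fin n) ℝ) - A).det) :
    ∃ r, t1 ≤ r ∧ (r • (1 : Matrix (Fin n) (Fin n) ℝ) - A).det = 0 := by
  have hcont : Continuous fun t : ℝ => (t • (1 : Matrix (Fin n) (Fin n) ℝ) - A).det := by
    apply Continuous.matrix_det
    exact (continuous_id.smul continuous_const).sub continuous_const
  have := intermediate_value_Icc hT hcont.continuousOn
  obtain ⟨r, hr, hr0⟩ := this ⟨h1, h2⟩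
  exact ⟨r, hr.1, hr0⟩

set_option maxHeartbeats 1000000 in
lemma crux {n : ℕ} (hn : 1 ≤ n) (a b : ℝ) (hb : 0 < b)
    (M : Matrix (Fin n) (Fin n) ℝ) (hM : ∀ i j, M i j = if i = j then a else b)
    (χ : Fin n → ℝ) (hχ0 : ∀ i, 0 ≤ χ i) (lam' : ℝ)
    (hlam : matrixSpecRad (M * Matrix.diagonal χ) < lam') (hlam0 : 0 < lam') :
    (∀ i, (a - b) * χ i < lam') ∧ ∑ i, b * χ i / (lam' - (a - b) * χ i) < 1 := by
  set c : ℝ := a - b with hc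
  set A : Matrix (Fin n) (Fin n) ℝ := M * Matrix.diagonal χ with hA
  -- no real root of the characteristic function at or above lam'
  have hnoroot : ∀ r, lam' ≤ r → (r • (1 : Matrix (Fin n) (Fin n) ℝ) - A).det ≠ 0 := by
    intro r hr hr0
    have := root_le_specRad A r hr0
    linarith
  haveI : Nonempty (Fin n) := ⟨⟨0, hn⟩⟩
  set K : ℝ := Finset.univ.sup' Finset.univ_nonempty (fun i => c * χ i) with hK
  obtain ⟨i1, -, hi1⟩ := Finset.exists_mem_eq_sup' Finset.univ_nonempty (fun i => c * χ i)
  have hKmax : ∀ i, c * χ i ≤ K := fun i =>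
    Finset.le_sup' (fun i => c * χ i) (Finset.mem_univ i)
  have hKi1 : K = c * χ i1 := by rw [hK]; exact hi1
  -- a good large T
  set T : ℝ := max lam' (K + b * (∑ i, χ i) + 1) with hT
  have hTK : K + b * (∑ i, χ i) + 1 ≤ T := le_max_right _ _
  have hsχ : 0 ≤ ∑ i, χ i := Finset.sum_nonneg fun i _ => hχ0 i
  have hTKpos : 0 < T - K := by nlinarith
  have hdetT : 0 ≤ (T • (1 : Matrix (Fin n) (Fin n) ℝ) - A).det := by
    have htne : ∀ i, T - c * χ i ≠ 0 := fun i => by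
      have := hKmax i; nlinarith
    rw [hA, det_formula a b M hM χ T htne]
    have hprod : 0 < ∏ i, (T - c * χ i) := Finset.prod_pos fun i _ => by
      have := hKmax i; nlinarith
    have hgT : ∑ i, b * χ i / (T - c * χ i) < 1 := by
      have hterm : ∀ i, b * χ i / (T - c * χ i) ≤ b * χ i / (T - K) := by
        intro i
        have h1 : 0 ≤ b * χ i := mul_nonneg hb.le (hχ0 i)
        have h2 : T - K ≤ T - c * χ i := by have := hKmax i; linarith
        gcongr
      calc ∑ i, b * χ i / (T - c * χ i) ≤ ∑ i, b * χ i / (T - K) :=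
            Finset.sum_le_sum fun i _ => hterm i
      _ = (b * ∑ i, χ i) / (T - K) := by
            rw [← Finset.sum_div, ← Finset.mul_sum]
      _ < 1 := by
            rw [div_lt_one hTKpos]
            linarith
    nlinarith
  -- Part 1 : all c * χ i < lam'
  have hpart1 : ∀ i, c * χ i < lam' := by
    by_contra hcon
    push_neg at hcon
    obtain ⟨i0, hi0⟩ := hcon
    have hKlam : lam' ≤ K := le_trans hi0 (hKmax i0)
    have hKpos : 0 < K := lt_of_lt_of_le hlam0 hKlam
    have hχ1pos : 0 < χ i1 := by
      rcases (hχ0 i1).lt_or_eq with h | h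
      · exact h
      · exfalso
        have h2 : K = 0 := by rw [hKi1, ← h, mul_zero]
        rw [h2] at hKpos
        exact lt_irrefl 0 hKpos
    have hcpos : 0 < c := by
      have h3 : c * χ i1 = K := hKi1.symm
      nlinarith
    set t1 : ℝ := K + b * χ i1 / 2 with ht1
    have ht1K : K < t1 := by
      rw [ht1]
      have : 0 < b * χ i1 / 2 := by positivity
      linarith
    have htne : ∀ i, t1 - c * χ i ≠ 0 := fun i => by
      have := hKmax i; nlinarith
    have hdet1 : (t1 • (1 : Matrix (Fin n) (Fin n) ℝ) - A).det ≤ 0 := by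
      rw [hA, det_formula a b M hM χ t1 htne]
      have hprod : 0 < ∏ i, (t1 - c * χ i) := Finset.prod_pos fun i _ => by
        have := hKmax i; nlinarith
      have hg1 : 2 ≤ ∑ i, b * χ i / (t1 - c * χ i) := by
        have hterm1 : b * χ i1 / (t1 - c * χ i1) = 2 := by
          have : t1 - c * χ i1 = b * χ i1 / 2 := by
            rw [ht1, ← hKi1]
            ring
          rw [this]
          rw [div_div_eq_mul_div, mul_comm]
          have hbχ : b * χ i1 ≠ 0 := by positivity
          field_simp
        have hrest : ∀ i ∈ Finset.univ, i ≠ i1 → 0 ≤ b * χ i / (t1 - c * χ i) := by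
          intro i _ _
          apply div_nonneg (mul_nonneg hb.le (hχ0 i))
          have := hKmax i; linarith
        calc (2:ℝ) = b * χ i1 / (t1 - c * χ i1) := hterm1.symm
        _ ≤ ∑ i, b * χ i / (t1 - c * χ i) :=
              Finset.single_le_sum (f := fun i => b * χ i / (t1 - c * χ i))
                (fun i _ => by
                  apply div_nonneg (mul_nonneg hb.le (hχ0 i))
                  have := hKmax i; nlinarith)
                (Finset.mem_univ i1)
      nlinarith
    obtain ⟨r, hr1, hr0⟩ := root_from_sign A t1 T (by
      rw [hT]; apply le_max_of_le_right; rw [ht1]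
      have hle := Finset.single_le_sum (f := χ) (fun i _ => hχ0 i) (Finset.mem_univ i1)
      nlinarith [hχ0 i1]) hdet1 hdetT
    exact hnoroot r (by linarith) hr0
  refine ⟨hpart1, ?_⟩
  -- Part 2 : the secular sum at lam' is < 1
  by_contra hcon
  push_neg at hcon
  have htne : ∀ i, lam' - c * χ i ≠ 0 := fun i => by have := hpart1 i; nlinarith
  have hdet1 : (lam' • (1 : Matrix (Fin n) (Fin n) ℝ) - A).det ≤ 0 := by
    rw [hA, det_formula a b M hM χ lam' htne]
    have hprod : 0 < ∏ i, (lam' - c * χ i) := Finset.prod_pos fun i _ => by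
      have := hpart1 i; nlinarith
    nlinarith
  obtain ⟨r, hr1, hr0⟩ := root_from_sign A lam' T (le_max_left _ _) hdet1 hdetT
  exact hnoroot r hr1 hr0

lemma topSum_one {n : ℕ} (hn : 1 ≤ n) (ξ : Fin n → ℝ) :
    (∀ i, ξ i ≤ topSum ξ 1) ∧ ∃ i0, ξ i0 = topSum ξ 1 := by
  obtain ⟨z, e, hz, hξ⟩ := exists_antitone_perm ξ
  have h1 : topSum ξ 1 = z ⟨0, hn⟩ := by
    rw [topSum_eq ξ z e hz hξ hn, Finset.sum_range_one]
    simp [zext, dif_pos (show 0 < n from hn)]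
  constructor
  · intro i
    rw [h1, hξ]
    exact hz (show (⟨0, hn⟩ : Fin n) ≤ e i from Fin.mk_le_of_le_val (Nat.zero_le _))
  · refine ⟨e.symm ⟨0, hn⟩, ?_⟩
    rw [h1, hξ, Function.comp_apply, Equiv.apply_symm_apply]

set_option maxHeartbeats 1000000 in
/-- Schur-convexity (if `a ≥ b`) and Schur-concavity (if `a ≤ b`) of
`Θ(ξ) = ρ(M·Diag(ξ))` for the matrix `M` with diagonal entries `a` and off-diagonal
entries `b > 0`. -/
theorem stmt6 (n : ℕ) (hn : 1 ≤ n) (a b : ℝ) (ha : 0 ≤ a) (hb : 0 < b)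
    (M : Matrix (Fin n) (Fin n) ℝ) (hM : ∀ i j, M i j = if i = j then a else b) :
    (b ≤ a →
      ∀ ξ χ : Fin n → ℝ, (∀ i, 0 ≤ ξ i) → (∀ i, 0 ≤ χ i) → IsMajorizedBy ξ χ →
        matrixSpecRad (M * Matrix.diagonal ξ) ≤ matrixSpecRad (M * Matrix.diagonal χ)) ∧
    (a ≤ b →
      ∀ ξ χ : Fin n → ℝ, (∀ i, 0 ≤ ξ i) → (∀ i, 0 ≤ χ i) → IsMajorizedBy ξ χ →
        matrixSpecRad (M * Matrix.diagonal χ) ≤ matrixSpecRad (M * Matrix.diagonal ξ)) := by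
  have hent : ∀ (v : Fin n → ℝ), (∀ i, 0 ≤ v i) → ∀ i j, 0 ≤ (M * Matrix.diagonal v) i j := by
    intro v hv i j
    rw [Matrix.mul_diagonal, hM i j]
    by_cases h : i = j
    · simp only [if_pos h]; exact mul_nonneg ha (hv j)
    · simp only [if_neg h]; exact mul_nonneg hb.le (hv j)
  constructor
  · -- Schur convex case : b ≤ a
    intro hba ξ χ hξ0 hχ0 hmaj
    have hc0 : 0 ≤ a - b := by linarith
    by_contra hcon
    push_neg at hcon
    set lam : ℝ := matrixSpecRad (M * Matrix.diagonal χ) with hlamdef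
    have hlamnn : 0 ≤ lam := specRad_nonneg hn _
    set lam' : ℝ := (lam + matrixSpecRad (M * Matrix.diagonal ξ)) / 2 with hlam'def
    have hlam'1 : lam < lam' := by rw [hlam'def]; linarith
    have hlam'2 : lam' < matrixSpecRad (M * Matrix.diagonal ξ) := by rw [hlam'def]; linarith
    have hlam'0 : 0 < lam' := by linarith
    obtain ⟨h1, h2⟩ := crux hn a b hb M hM χ hχ0 lam' hlam'1 hlam'0
    -- the common upper bound X on all entries
    obtain ⟨hχle, i0, hi0⟩ := topSum_one hn χ
    have hξle : ∀ i, ξ i ≤ topSum χ 1 := fun i =>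
      le_trans ((topSum_one hn ξ).1 i) (hmaj.1 1 hn)
    set X : ℝ := topSum χ 1 with hXdef
    have hcX : (a - b) * X < lam' := by rw [← hi0]; exact h1 i0
    have hden : ∀ x : ℝ, 0 ≤ x ∧ x ≤ X → 0 < lam' - (a - b) * x := by
      intro x hx
      have : (a - b) * x ≤ (a - b) * X := mul_le_mul_of_nonneg_left hx.2 hc0
      linarith
    -- majorization step
    have hmajsum : ∑ i, b * ξ i / (lam' - (a - b) * ξ i) ≤
        ∑ i, b * χ i / (lam' - (a - b) * χ i) := by
      apply maj_sum_le ξ χ hmaj (fun x => 0 ≤ x ∧ x ≤ X)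
        (fun i => ⟨hξ0 i, hξle i⟩) (fun i => ⟨hχ0 i, hχle i⟩)
        (fun x => b * x / (lam' - (a - b) * x))
        (fun x y => b * lam' / ((lam' - (a - b) * x) * (lam' - (a - b) * y)))
      · intro x y hx hy
        have dx := hden x hx
        have dy := hden y hy
        rw [div_sub_div _ _ dy.ne' dx.ne', div_mul_eq_mul_div, div_eq_div_iff (mul_ne_zero dy.ne' dx.ne') (mul_ne_zero dx.ne' dy.ne')]
        ring
      · intro x y x' y' hx hy hx' hy' hxx hyy
        have dx := hden x hx
        have dy := hden y hy
        have dx' := hden x' hx'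
        have dy' := hden y' hy'
        have hnum : 0 < b * lam' := by positivity
        have h5 : 0 < (lam' - (a - b) * x) * (lam' - (a - b) * y) := mul_pos dx dy
        have h6 : (lam' - (a - b) * x) * (lam' - (a - b) * y) ≤
            (lam' - (a - b) * x') * (lam' - (a - b) * y') := by
          apply mul_le_mul _ _ dy.le (by linarith)
          · nlinarith
          · nlinarith
        exact (div_le_div_iff_of_pos_left hnum (lt_of_lt_of_le h5 h6) h5).mpr h6
    have hgξ : ∑ i, b * ξ i / (lam' - (a - b) * ξ i) < 1 := lt_of_le_of_lt hmajsum h2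
    -- weighted row bound
    have hdenξ : ∀ i, 0 < lam' - (a - b) * ξ i := fun i => hden (ξ i) ⟨hξ0 i, hξle i⟩
    have hup : matrixSpecRad (M * Matrix.diagonal ξ) ≤ lam' := by
      apply eig_upper hn _ (hent ξ hξ0) (fun i => (lam' - (a - b) * ξ i)⁻¹)
        (fun i => inv_pos.2 (hdenξ i)) lam'
      intro i
      have hsplit : ∑ j, (M * Matrix.diagonal ξ) i j * (lam' - (a - b) * ξ j)⁻¹ =
          (a - b) * ξ i * (lam' - (a - b) * ξ i)⁻¹ +
            ∑ j, b * ξ j / (lam' - (a - b) * ξ j) := by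
        have hterm : ∀ j, (M * Matrix.diagonal ξ) i j * (lam' - (a - b) * ξ j)⁻¹ =
            (if i = j then (a - b) * ξ j * (lam' - (a - b) * ξ j)⁻¹ else 0) +
              b * ξ j / (lam' - (a - b) * ξ j) := by
          intro j
          rw [Matrix.mul_diagonal, hM i j, div_eq_mul_inv]
          by_cases h : i = j
          · simp only [if_pos h]; ring
          · simp only [if_neg h]; ring
        rw [Finset.sum_congr rfl fun j _ => hterm j, Finset.sum_add_distrib,
          Finset.sum_ite_eq Finset.univ i
            (fun j => (a - b) * ξ j * (lam' - (a - b) * ξ j)⁻¹),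
          if_pos (Finset.mem_univ i)]
      rw [hsplit]
      have hone : (lam' - (a - b) * ξ i) * (lam' - (a - b) * ξ i)⁻¹ = 1 :=
        mul_inv_cancel₀ (hdenξ i).ne'
      nlinarith [hgξ]
    linarith
  · -- Schur concave case : a ≤ b
    intro hab ξ χ hξ0 hχ0 hmaj
    have hc0 : a - b ≤ 0 := by linarith
    by_contra hcon
    push_neg at hcon
    set lam : ℝ := matrixSpecRad (M * Matrix.diagonal ξ) with hlamdef
    have hlamnn : 0 ≤ lam := specRad_nonneg hn _
    set lam' : ℝ := (lam + matrixSpecRad (M * Matrix.diagonal χ)) / 2 with hlam'def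
    have hlam'1 : lam < lam' := by rw [hlam'def]; linarith
    have hlam'2 : lam' < matrixSpecRad (M * Matrix.diagonal χ) := by rw [hlam'def]; linarith
    have hlam'0 : 0 < lam' := by linarith
    obtain ⟨h1, h2⟩ := crux hn a b hb M hM ξ hξ0 lam' hlam'1 hlam'0
    obtain ⟨hχle, i0, hi0⟩ := topSum_one hn χ
    have hξle : ∀ i, ξ i ≤ topSum χ 1 := fun i =>
      le_trans ((topSum_one hn ξ).1 i) (hmaj.1 1 hn)
    set X : ℝ := topSum χ 1 with hXdef
    have hden : ∀ x : ℝ, 0 ≤ x ∧ x ≤ X → 0 < lam' - (a - b) * x := by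
      intro x hx
      have : (a - b) * x ≤ 0 := mul_nonpos_of_nonpos_of_nonneg hc0 hx.1
      linarith
    have hmajsum : ∑ i, -(b * ξ i / (lam' - (a - b) * ξ i)) ≤
        ∑ i, -(b * χ i / (lam' - (a - b) * χ i)) := by
      apply maj_sum_le ξ χ hmaj (fun x => 0 ≤ x ∧ x ≤ X)
        (fun i => ⟨hξ0 i, hξle i⟩) (fun i => ⟨hχ0 i, hχle i⟩)
        (fun x => -(b * x / (lam' - (a - b) * x)))
        (fun x y => -(b * lam' / ((lam' - (a - b) * x) * (lam' - (a - b) * y))))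
      · intro x y hx hy
        have dx := hden x hx
        have dy := hden y hy
        rw [neg_sub_neg, neg_mul, ← neg_sub, neg_inj, div_sub_div _ _ dy.ne' dx.ne', div_mul_eq_mul_div, div_eq_div_iff (mul_ne_zero dy.ne' dx.ne') (mul_ne_zero dx.ne' dy.ne')]
        ring
      · intro x y x' y' hx hy hx' hy' hxx hyy
        have dx := hden x hx
        have dy := hden y hy
        have dx' := hden x' hx'
        have dy' := hden y' hy'
        have hnum : 0 < b * lam' := by positivity
        have h5 : 0 < (lam' - (a - b) * x') * (lam' - (a - b) * y') := mul_pos dx' dy'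
        have h6 : (lam' - (a - b) * x') * (lam' - (a - b) * y') ≤
            (lam' - (a - b) * x) * (lam' - (a - b) * y) := by
          apply mul_le_mul _ _ dy'.le (by linarith)
          · nlinarith
          · nlinarith
        have := (div_le_div_iff_of_pos_left hnum (lt_of_lt_of_le h5 h6) h5).mpr h6
        linarith
    have hgχ : ∑ i, b * χ i / (lam' - (a - b) * χ i) < 1 := by
      have : ∑ i, b * χ i / (lam' - (a - b) * χ i) ≤
          ∑ i, b * ξ i / (lam' - (a - b) * ξ i) := by
        have e1 : ∑ i, -(b * ξ i / (lam' - (a - b) * ξ i)) =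
            -∑ i, b * ξ i / (lam' - (a - b) * ξ i) := by rw [Finset.sum_neg_distrib]
        have e2 : ∑ i, -(b * χ i / (lam' - (a - b) * χ i)) =
            -∑ i, b * χ i / (lam' - (a - b) * χ i) := by rw [Finset.sum_neg_distrib]
        rw [e1, e2] at hmajsum
        linarith
      linarith
    have hdenχ : ∀ i, 0 < lam' - (a - b) * χ i := fun i => hden (χ i) ⟨hχ0 i, hχle i⟩
    have hup : matrixSpecRad (M * Matrix.diagonal χ) ≤ lam' := by
      apply eig_upper hn _ (hent χ hχ0) (fun i => (lam' - (a - b) * χ i)⁻¹)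
        (fun i => inv_pos.2 (hdenχ i)) lam'
      intro i
      have hsplit : ∑ j, (M * Matrix.diagonal χ) i j * (lam' - (a - b) * χ j)⁻¹ =
          (a - b) * χ i * (lam' - (a - b) * χ i)⁻¹ +
            ∑ j, b * χ j / (lam' - (a - b) * χ j) := by
        have hterm : ∀ j, (M * Matrix.diagonal χ) i j * (lam' - (a - b) * χ j)⁻¹ =
            (if i = j then (a - b) * χ j * (lam' - (a - b) * χ j)⁻¹ else 0) +
              b * χ j / (lam' - (a - b) * χ j) := by
          intro j
          rw [Matrix.mul_diagonal, hM i j, div_eq_mul_inv]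
          by_cases h : i = j
          · simp only [if_pos h]; ring
          · simp only [if_neg h]; ring
        rw [Finset.sum_congr rfl fun j _ => hterm j, Finset.sum_add_distrib,
          Finset.sum_ite_eq Finset.univ i
            (fun j => (a - b) * χ j * (lam' - (a - b) * χ j)⁻¹),
          if_pos (Finset.mem_univ i)]
      rw [hsplit]
      have hone : (lam' - (a - b) * χ i) * (lam' - (a - b) * χ i)⁻¹ = 1 :=
        mul_inv_cancel₀ (hdenχ i).ne'
      nlinarith [hgχ]
    linarith
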